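/- Let T : E → F be a positive, order continuous linear operator, let x ∈ G with x ≥ 0, and let D be a nonempty downward-directed set of positive elements of E whose infimum in G is x. Then the infimum in F of {T(d) : d ∈ D} exists and equals sup{T(z) : z ∈ E, 0 ≤ z ≤ x} (the value of the canonical extension of T at x). -/

import Mathlib

theorem stmt14
    {G : Type*} [Lattice G] [AddCommGroup G] [Module ℝ G]
    [CovariantClass G G (· + ·) (· ≤ ·)] [PosSMulMono ℝ G]
    (arch : ∀ x y : G, (∀ n : ℕ, n • x ≤ y) → x ≤ 0)
    (E : Set G)
    (hE0 : (0 : G) ∈ E)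
    (hEadd : ∀ x ∈ E, ∀ y ∈ E, x + y ∈ E)
    (hEsmul : ∀ (c : ℝ), ∀ x ∈ E, c • x ∈ E)
    (hEsup : ∀ x ∈ E, ∀ y ∈ E, x ⊔ y ∈ E)
    (hEinf : ∀ x ∈ E, ∀ y ∈ E, x ⊓ y ∈ E)
    (hdense : ∀ x : G, 0 < x → ∃ y ∈ E, 0 < y ∧ y ≤ x)
    (hmaj : ∀ x : G, ∃ y ∈ E, x ≤ y)
    {F : Type*} [ConditionallyCompleteLattice F] [AddCommGroup F] [Module ℝ F]
    [CovariantClass F F (· + ·) (· ≤ ·)] [PosSMulMono ℝ F]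
    (T : G → F)
    (hT_add : ∀ x ∈ E, ∀ y ∈ E, T (x + y) = T x + T y)
    (hT_smul : ∀ (c : ℝ), ∀ x ∈ E, T (c • x) = c • T x)
    (hT_pos : ∀ x ∈ E, 0 ≤ x → 0 ≤ T x)
    (hT_oc : ∀ D : Set G, D.Nonempty → D ⊆ E → DirectedOn (· ≥ ·) D →
      IsGLB D 0 → IsGLB (T '' D) 0)
    :
    ∀ x : G, 0 ≤ x → ∀ D : Set G, D.Nonempty → D ⊆ E → (∀ d ∈ D, 0 ≤ d) →
      DirectedOn (· ≥ ·) D → IsGLB D x →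
      ∃ v : F, IsLUB (T '' {z | z ∈ E ∧ 0 ≤ z ∧ z ≤ x}) v ∧ IsGLB (T '' D) v := by
  intro x hx D hDne hDE hDpos hDdir hDglb
  have hEsub : ∀ a ∈ E, ∀ b ∈ E, a - b ∈ E := by
    intro a ha b hb
    have := hEadd a ha _ (hEsmul (-1) b hb)
    simpa [sub_eq_add_neg] using this
  have hT_sub : ∀ a ∈ E, ∀ b ∈ E, T (a - b) = T a - T b := by
    intro a ha b hb
    have h1 : T (a + (-1 : ℝ) • b) = T a + T ((-1 : ℝ) • b) :=
      hT_add a ha _ (hEsmul (-1) b hb)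
    have h2 : T ((-1 : ℝ) • b) = (-1 : ℝ) • T b := hT_smul (-1) b hb
    rw [h2] at h1
    simpa [sub_eq_add_neg] using h1
  have hT_mono : ∀ a ∈ E, ∀ b ∈ E, a ≤ b → T a ≤ T b := by
    intro a ha b hb hab
    have h1 : 0 ≤ T (b - a) := hT_pos _ (hEsub b hb a ha) (sub_nonneg.mpr hab)
    rw [hT_sub b hb a ha] at h1
    exact sub_nonneg.mp h1
  set S : Set G := {z | z ∈ E ∧ 0 ≤ z ∧ z ≤ x} with hS
  have hS0 : (0 : G) ∈ S := ⟨hE0, le_refl 0, hx⟩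
  obtain ⟨d0, hd0⟩ := hDne
  have hxleD : ∀ d ∈ D, x ≤ d := fun d hd => hDglb.1 hd
  have hSleD : ∀ z ∈ S, ∀ d ∈ D, T z ≤ T d := fun z hz d hd =>
    hT_mono z hz.1 d (hDE hd) (hz.2.2.trans (hxleD d hd))
  have hTSne : (T '' S).Nonempty := ⟨T 0, Set.mem_image_of_mem T hS0⟩
  have hTSbdd : BddAbove (T '' S) := by
    refine ⟨T d0, ?_⟩
    rintro _ ⟨z, hz, rfl⟩
    exact hSleD z hz d0 hd0
  set v : F := sSup (T '' S) with hv
  have hvlub : IsLUB (T '' S) v := isLUB_csSup hTSne hTSbdd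
  -- key lemma: any w with w ≤ x - z for all z ∈ S satisfies w ≤ 0
  have hkey : ∀ w : G, (∀ z ∈ S, w ≤ x - z) → w ≤ 0 := by
    intro w hw
    by_contra hcon
    have hwx : ∀ z ∈ S, w ⊔ 0 ≤ x - z := fun z hz =>
      sup_le (hw z hz) (sub_nonneg.mpr hz.2.2)
    have hne : w ⊔ 0 ≠ 0 := fun h => hcon (h ▸ le_sup_left)
    have hpos : 0 < w ⊔ 0 := lt_of_le_of_ne le_sup_right hne.symm
    obtain ⟨y, hyE, hy0, hyw⟩ := hdense (w ⊔ 0) hpos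
    have hstep : ∀ n : ℕ, (n : ℕ) • y ∈ S := by
      intro n
      induction n with
      | zero => simpa using hS0
      | succ n ih =>
        have hmem : (n : ℕ) • y + y ∈ E := hEadd _ ih.1 y hyE
        have hnn : 0 ≤ (n : ℕ) • y + y := add_nonneg ih.2.1 hy0.le
        have hle : (n : ℕ) • y + y ≤ x := by
          have := hwx _ ih
          have h2 : y ≤ x - (n : ℕ) • y := hyw.trans this
          calc (n : ℕ) • y + y ≤ (n : ℕ) • y + (x - (n : ℕ) • y) :=
                add_le_add_right h2 _
            _ = x := by abel
        have key : (n + 1) • y = (n : ℕ) • y + y := succ_nsmul y n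
        rw [key]
        exact ⟨hmem, hnn, hle⟩
    have : y ≤ 0 := arch y x fun n => (hstep n).2.2
    exact absurd this hy0.not_ge
  -- the auxiliary directed set A = {d - z}
  set A : Set G := {a | ∃ d ∈ D, ∃ z ∈ S, a = d - z} with hA
  have hAne : A.Nonempty := ⟨d0 - 0, d0, hd0, 0, hS0, rfl⟩
  have hAE : A ⊆ E := by
    rintro _ ⟨d, hd, z, hz, rfl⟩
    exact hEsub d (hDE hd) z hz.1
  have hAdir : DirectedOn (· ≥ ·) A := by
    rintro _ ⟨d1, hd1, z1, hz1, rfl⟩ _ ⟨d2, hd2, z2, hz2, rfl⟩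
    obtain ⟨d3, hd3, h31, h32⟩ := hDdir d1 hd1 d2 hd2
    have hz3 : z1 ⊔ z2 ∈ S :=
      ⟨hEsup z1 hz1.1 z2 hz2.1, le_trans hz1.2.1 le_sup_left,
        sup_le hz1.2.2 hz2.2.2⟩
    refine ⟨d3 - (z1 ⊔ z2), ⟨d3, hd3, z1 ⊔ z2, hz3, rfl⟩, ?_, ?_⟩
    · exact sub_le_sub h31 le_sup_left
    · exact sub_le_sub h32 le_sup_right
  have hAglb : IsGLB A 0 := by
    constructor
    · rintro _ ⟨d, hd, z, hz, rfl⟩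
      exact sub_nonneg.mpr (hz.2.2.trans (hxleD d hd))
    · intro w hw
      refine hkey w fun z hz => ?_
      have h1 : ∀ d ∈ D, w + z ≤ d := by
        intro d hd
        have := hw ⟨d, hd, z, hz, rfl⟩
        calc w + z ≤ (d - z) + z := add_le_add_left this z
          _ = d := by abel
      have h2 : w + z ≤ x := hDglb.2 h1
      calc w = (w + z) - z := by abel
        _ ≤ x - z := sub_le_sub_right h2 z
  have hTA : IsGLB (T '' A) 0 := hT_oc A hAne hAE hAdir hAglb
  refine ⟨v, hvlub, ?_, ?_⟩
  · rintro _ ⟨d, hd, rfl⟩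
    exact hvlub.2 fun _ ⟨z, hz, h⟩ => h ▸ hSleD z hz d hd
  · intro b hb
    have hbv : b - v ≤ 0 := by
      refine hTA.2 ?_
      rintro _ ⟨_, ⟨d, hd, z, hz, rfl⟩, rfl⟩
      rw [hT_sub d (hDE hd) z hz.1]
      exact sub_le_sub (hb ⟨d, hd, rfl⟩) (hvlub.1 ⟨z, hz, rfl⟩)
    exact sub_nonpos.mp hbv
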